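/- Let β, γ, λ > 0 and J ≥ 0. Let φ : (0,∞) × ℝ → ℂ be measurable with |φ(t,s)| ≤ λ · e^{−βt} · e^{−γ J · arctan(t/|s|)} for all t > 0 and all s ≠ 0, and let h : ℝ → ℂ be measurable with A := ∫_ℝ |h(s)| (1 + s²) ds < ∞. Then the iterated integral I := ∫_ℝ h(s) ( ∫₀^∞ t · φ(t,s) dt ) ds converges absolutely, and there is a constant K > 0 depending only on β and γ such that |I| ≤ K · λ · A / (1 + J²). -/

import Mathlib

set_option maxHeartbeats 1000000

open MeasureTheory

lemma texp_integrableOn (b : ℝ) (hb : 0 < b) :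
    IntegrableOn (fun t : ℝ => t * Real.exp (-(b * t))) (Set.Ioi 0) := by
  have h := integrableOn_rpow_mul_exp_neg_mul_rpow (s := 1) (p := 1) (b := b)
    (by norm_num) zero_lt_one hb
  refine h.congr_fun (fun x hx => ?_) measurableSet_Ioi
  have hx0 : (0:ℝ) < x := hx
  simp only [Real.rpow_one, neg_mul]

lemma texp_integral (b : ℝ) (hb : 0 < b) :
    ∫ t in Set.Ioi (0:ℝ), t * Real.exp (-(b * t)) = 1 / b ^ 2 := by
  have h := Real.integral_rpow_mul_exp_neg_mul_Ioi (a := 2) (r := b) (by norm_num) hb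
  rw [Real.Gamma_two, mul_one] at h
  have h2 : ∫ t in Set.Ioi (0:ℝ), t ^ ((2:ℝ) - 1) * Real.exp (-(b * t)) =
      ∫ t in Set.Ioi (0:ℝ), t * Real.exp (-(b * t)) := by
    refine setIntegral_congr_fun measurableSet_Ioi (fun x hx => ?_)
    norm_num
  rw [h2] at h
  rw [h]
  rw [show ((1:ℝ)/b) ^ (2:ℝ) = ((1:ℝ)/b) ^ (2:ℕ) by
    rw [← Real.rpow_natCast]; norm_num]
  rw [div_pow, one_pow]

lemma half_le_arctan {x : ℝ} (h0 : 0 ≤ x) (h1 : x ≤ 1) : x / 2 ≤ Real.arctan x := by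
  have hmono : MonotoneOn (fun y : ℝ => Real.arctan y - y / 2) (Set.Icc 0 1) := by
    apply monotoneOn_of_deriv_nonneg (convex_Icc 0 1)
    · exact (Real.continuous_arctan.sub (continuous_id.div_const 2)).continuousOn
    · intro y hy
      exact ((Real.differentiable_arctan y).sub
        ((differentiable_id.div_const 2) y)).differentiableWithinAt
    · intro y hy
      rw [interior_Icc] at hy
      have hder : HasDerivAt (fun y : ℝ => Real.arctan y - y / 2)
          (1 / (1 + y ^ 2) - 1 / 2) y :=
        (Real.hasDerivAt_arctan y).sub ((hasDerivAt_id y).div_const 2)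
      rw [hder.deriv]
      have hy2 : y ^ 2 ≤ 1 := by nlinarith [hy.1, hy.2]
      have : (1:ℝ) + y ^ 2 ≤ 2 := by linarith
      have h1y : (0:ℝ) < 1 + y ^ 2 := by positivity
      have := one_div_le_one_div_of_le h1y this
      linarith
  have h01 : (0:ℝ) ∈ Set.Icc (0:ℝ) 1 := by constructor <;> norm_num
  have hx01 : x ∈ Set.Icc (0:ℝ) 1 := ⟨h0, h1⟩
  have := hmono h01 hx01 h0
  simp only [Real.arctan_zero] at this
  linarith

lemma min_le_arctan {x : ℝ} (hx : 0 ≤ x) :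
    min (x / 2) (Real.pi / 4) ≤ Real.arctan x := by
  rcases le_or_gt x 1 with h | h
  · exact le_trans (min_le_left _ _) (half_le_arctan hx h)
  · refine le_trans (min_le_right _ _) ?_
    rw [← Real.arctan_one]
    exact Real.arctan_strictMono.monotone h.le

theorem stmt12 (β γ : ℝ) (hβ : 0 < β) (hγ : 0 < γ) :
    ∃ K > (0 : ℝ),
      ∀ (lam J : ℝ), 0 < lam → 0 ≤ J →
      ∀ φ : ℝ → ℝ → ℂ, Measurable (Function.uncurry φ) →
        (∀ t : ℝ, 0 < t → ∀ s : ℝ, s ≠ 0 →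
          ‖φ t s‖ ≤ lam * Real.exp (-β * t) * Real.exp (-γ * J * Real.arctan (t / |s|))) →
      ∀ h : ℝ → ℂ, Measurable h →
        Integrable (fun s => ‖h s‖ * (1 + s ^ 2)) →
        (∀ s : ℝ, s ≠ 0 →
          IntegrableOn (fun t : ℝ => (t : ℂ) * φ t s) (Set.Ioi (0 : ℝ))) ∧
        Integrable (fun s : ℝ => h s * ∫ t in Set.Ioi (0 : ℝ), (t : ℂ) * φ t s) ∧
        ‖∫ s : ℝ, h s * ∫ t in Set.Ioi (0 : ℝ), (t : ℂ) * φ t s‖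
          ≤ K * lam * (∫ s : ℝ, ‖h s‖ * (1 + s ^ 2)) / (1 + J ^ 2) := by
  set c : ℝ := γ * Real.pi / 4 with hc_def
  have hπ := Real.pi_pos
  have hc : 0 < c := by positivity
  set K : ℝ := (1 / β ^ 2 + 4 / γ ^ 2) + (1 + 4 / c ^ 2) / β ^ 2 with hK_def
  have hK : 0 < K := by positivity
  refine ⟨K, hK, ?_⟩
  intro lam J hlam hJ φ hφm hφ h hhm hhi
  -- exponential decay bound in J
  have hexpJ : Real.exp (-(c * J)) * (1 + J ^ 2) ≤ 1 + 4 / c ^ 2 := by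
    have h1 : c * J / 2 + 1 ≤ Real.exp (c * J / 2) := Real.add_one_le_exp _
    have h2 : (c * J / 2) ^ 2 ≤ Real.exp (c * J) := by
      have : (c * J / 2) ^ 2 ≤ (c * J / 2 + 1) ^ 2 := by nlinarith [mul_nonneg hc.le hJ]
      calc (c * J / 2) ^ 2 ≤ (c * J / 2 + 1) ^ 2 := this
        _ ≤ Real.exp (c * J / 2) ^ 2 := by
            apply sq_le_sq' <;> nlinarith [mul_nonneg hc.le hJ, Real.exp_pos (c * J / 2)]
        _ = Real.exp (c * J) := by rw [← Real.exp_nat_mul]; ring_nf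
    have hJ2 : J ^ 2 * Real.exp (-(c * J)) ≤ 4 / c ^ 2 := by
      have hE := Real.exp_pos (c * J)
      have heq : J ^ 2 * Real.exp (-(c * J)) = J ^ 2 / Real.exp (c * J) := by
        rw [Real.exp_neg]; ring
      rw [heq, div_le_div_iff₀ hE (by positivity)]
      nlinarith [h2]
    have hE1 : Real.exp (-(c * J)) ≤ 1 := by
      apply Real.exp_le_one_iff.mpr; nlinarith [mul_nonneg hc.le hJ]
    nlinarith [Real.exp_pos (-(c * J))]
  -- per-s data
  set a : ℝ → ℝ := fun s => β + γ * J / (2 * |s|) with ha_def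
  have ha_pos : ∀ s : ℝ, s ≠ 0 → 0 < a s := by
    intro s hs
    have : (0:ℝ) < |s| := abs_pos.mpr hs
    have : 0 ≤ γ * J / (2 * |s|) := by positivity
    simp only [ha_def]; linarith
  set G : ℝ → ℝ → ℝ := fun s t =>
    lam * (t * Real.exp (-(a s * t)) + Real.exp (-(c * J)) * (t * Real.exp (-(β * t))))
    with hG_def
  have hG_int : ∀ s : ℝ, s ≠ 0 → IntegrableOn (G s) (Set.Ioi 0) := by
    intro s hs
    exact (((texp_integrableOn (a s) (ha_pos s hs)).add
      ((texp_integrableOn β hβ).const_mul _)).const_mul lam)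
  -- pointwise bound
  have hptw : ∀ s : ℝ, s ≠ 0 → ∀ t ∈ Set.Ioi (0:ℝ), ‖(t : ℂ) * φ t s‖ ≤ G s t := by
    intro s hs t ht
    have ht0 : (0:ℝ) < t := ht
    have hs0 : (0:ℝ) < |s| := abs_pos.mpr hs
    have hx : 0 ≤ t / |s| := by positivity
    have harc := min_le_arctan hx
    have hγJ : 0 ≤ γ * J := mul_nonneg hγ.le hJ
    have hkey : Real.exp (-γ * J * Real.arctan (t / |s|)) ≤
        Real.exp (-(γ * J * (t / |s|) / 2)) + Real.exp (-(c * J)) := by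
      rcases min_cases (t / |s| / 2) (Real.pi / 4) with ⟨heq, _⟩ | ⟨heq, _⟩
      · have : Real.exp (-γ * J * Real.arctan (t / |s|)) ≤
            Real.exp (-(γ * J * (t / |s|) / 2)) := by
          apply Real.exp_le_exp.mpr
          have := harc; rw [heq] at this
          nlinarith
        linarith [Real.exp_pos (-(c * J))]
      · have : Real.exp (-γ * J * Real.arctan (t / |s|)) ≤ Real.exp (-(c * J)) := by
          apply Real.exp_le_exp.mpr
          have := harc; rw [heq] at this
          have : γ * J * (Real.pi / 4) ≤ γ * J * Real.arctan (t / |s|) := by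
            apply mul_le_mul_of_nonneg_left this hγJ
          simp only [hc_def]; nlinarith
        linarith [Real.exp_pos (-(γ * J * (t / |s|) / 2))]
    have hnorm : ‖(t : ℂ) * φ t s‖ = t * ‖φ t s‖ := by
      rw [norm_mul, Complex.norm_real, Real.norm_eq_abs, abs_of_pos ht0]
    rw [hnorm]
    have hφb := hφ t ht0 s hs
    have step1 : t * ‖φ t s‖ ≤
        t * (lam * Real.exp (-β * t) * Real.exp (-γ * J * Real.arctan (t / |s|))) := by
      apply mul_le_mul_of_nonneg_left hφb ht0.le
    refine step1.trans ?_
    have step2 : lam * Real.exp (-β * t) * Real.exp (-γ * J * Real.arctan (t / |s|)) ≤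
        lam * Real.exp (-β * t) *
          (Real.exp (-(γ * J * (t / |s|) / 2)) + Real.exp (-(c * J)))  := by
      apply mul_le_mul_of_nonneg_left hkey (by positivity)
    have step3 : t * (lam * Real.exp (-β * t) *
          (Real.exp (-(γ * J * (t / |s|) / 2)) + Real.exp (-(c * J)))) = G s t := by
      simp only [hG_def, ha_def]
      rw [mul_add]
      have e1 : Real.exp (-β * t) * Real.exp (-(γ * J * (t / |s|) / 2)) =
          Real.exp (-((β + γ * J / (2 * |s|)) * t)) := by
        rw [← Real.exp_add]; congr 1; field_simp; ring
      have e2 : Real.exp (-β * t) = Real.exp (-(β * t)) := by ring_nf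
      rw [mul_assoc lam, e1, mul_assoc lam (Real.exp (-β * t)), mul_comm (Real.exp (-β*t)),
        ← mul_assoc lam, e2]
      ring
    calc t * (lam * Real.exp (-β * t) * Real.exp (-γ * J * Real.arctan (t / |s|)))
        ≤ t * (lam * Real.exp (-β * t) *
          (Real.exp (-(γ * J * (t / |s|) / 2)) + Real.exp (-(c * J)))) := by
          apply mul_le_mul_of_nonneg_left step2 ht0.le
      _ = G s t := step3
  -- measurability of the slice
  have hslice_m : ∀ s : ℝ, Measurable (fun t : ℝ => (t : ℂ) * φ t s) := by
    intro s
    exact (Complex.measurable_ofReal).mul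
      (hφm.comp (measurable_id.prodMk measurable_const))
  -- part 1
  have part1 : ∀ s : ℝ, s ≠ 0 →
      IntegrableOn (fun t : ℝ => (t : ℂ) * φ t s) (Set.Ioi (0 : ℝ)) := by
    intro s hs
    refine Integrable.mono' (hG_int s hs) (hslice_m s).aestronglyMeasurable ?_
    exact (ae_restrict_iff' measurableSet_Ioi).mpr (Filter.Eventually.of_forall
      (fun t ht => hptw s hs t ht))
  refine ⟨part1, ?_⟩
  -- bound on inner integral
  have hGval : ∀ s : ℝ, s ≠ 0 → ∫ t in Set.Ioi (0:ℝ), G s t =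
      lam * (1 / (a s) ^ 2 + Real.exp (-(c * J)) * (1 / β ^ 2)) := by
    intro s hs
    simp only [hG_def]
    rw [integral_const_mul]
    rw [integral_add (texp_integrableOn (a s) (ha_pos s hs))
      ((texp_integrableOn β hβ).const_mul _)]
    rw [integral_const_mul, texp_integral (a s) (ha_pos s hs), texp_integral β hβ]
  have hinner : ∀ s : ℝ, s ≠ 0 →
      ‖∫ t in Set.Ioi (0:ℝ), (t : ℂ) * φ t s‖ ≤ lam * K * (1 + s ^ 2) / (1 + J ^ 2) := by
    intro s hs
    have h1 : ‖∫ t in Set.Ioi (0:ℝ), (t : ℂ) * φ t s‖ ≤ ∫ t in Set.Ioi (0:ℝ), G s t := by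
      apply norm_integral_le_of_norm_le (hG_int s hs)
      exact (ae_restrict_iff' measurableSet_Ioi).mpr (Filter.Eventually.of_forall
        (fun t ht => hptw s hs t ht))
    rw [hGval s hs] at h1
    refine h1.trans ?_
    have hs0 : (0:ℝ) < |s| := abs_pos.mpr hs
    have hJ2 : (0:ℝ) < 1 + J ^ 2 := by positivity
    have has := ha_pos s hs
    -- (1 + J^2) / (a s)^2 ≤ 1/β^2 + 4 s^2/γ^2
    have key1 : (1 + J ^ 2) * (1 / (a s) ^ 2) ≤ 1 / β ^ 2 + 4 * s ^ 2 / γ ^ 2 := by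
      have hb1 : 1 / (a s) ^ 2 ≤ 1 / β ^ 2 := by
        apply one_div_le_one_div_of_le (by positivity)
        have : β ≤ a s := by
          simp only [ha_def]
          have : 0 ≤ γ * J / (2 * |s|) := by positivity
          linarith
        nlinarith
      have hb2 : J ^ 2 * (1 / (a s) ^ 2) ≤ 4 * s ^ 2 / γ ^ 2 := by
        have hga : γ * J / (2 * |s|) ≤ a s := by
          simp only [ha_def]; linarith
        have hsq : (γ * J) ^ 2 / (4 * s ^ 2) ≤ (a s) ^ 2 := by
          have h0 : 0 ≤ γ * J / (2 * |s|) := by positivity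
          have := mul_self_le_mul_self h0 hga
          have habs : |s| ^ 2 = s ^ 2 := sq_abs s
          calc (γ * J) ^ 2 / (4 * s ^ 2) = (γ * J / (2 * |s|)) * (γ * J / (2 * |s|)) := by
                rw [div_mul_div_comm, ← sq_abs s]; ring
            _ ≤ a s * a s := this
            _ = (a s) ^ 2 := (sq (a s)).symm
        -- J^2 / (a s)^2 ≤ 4 s^2 / γ^2
        rw [mul_one_div, div_le_div_iff₀ (by positivity) (by positivity)]
        rw [div_le_iff₀ (by positivity)] at hsq
        nlinarith [sq_nonneg s, sq_nonneg (a s)]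
      calc (1 + J ^ 2) * (1 / (a s) ^ 2)
          = 1 / (a s) ^ 2 + J ^ 2 * (1 / (a s) ^ 2) := by ring
        _ ≤ 1 / β ^ 2 + 4 * s ^ 2 / γ ^ 2 := add_le_add hb1 hb2
    have key2 : (1 + J ^ 2) * (Real.exp (-(c * J)) * (1 / β ^ 2)) ≤
        (1 + 4 / c ^ 2) / β ^ 2 := by
      have := hexpJ
      have hβ2 : (0:ℝ) < 1 / β ^ 2 := by positivity
      calc (1 + J ^ 2) * (Real.exp (-(c * J)) * (1 / β ^ 2))
          = (Real.exp (-(c * J)) * (1 + J ^ 2)) * (1 / β ^ 2) := by ring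
        _ ≤ (1 + 4 / c ^ 2) * (1 / β ^ 2) := by
            apply mul_le_mul_of_nonneg_right hexpJ hβ2.le
        _ = (1 + 4 / c ^ 2) / β ^ 2 := by ring
    have hsum : (1 + J ^ 2) * (1 / (a s) ^ 2 + Real.exp (-(c * J)) * (1 / β ^ 2)) ≤
        K * (1 + s ^ 2) := by
      have h12 : 1 / β ^ 2 + 4 * s ^ 2 / γ ^ 2 + (1 + 4 / c ^ 2) / β ^ 2 ≤
          K * (1 + s ^ 2) := by
        simp only [hK_def]
        have hs2 : (0:ℝ) ≤ s ^ 2 := sq_nonneg s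
        have e1 : (0:ℝ) < β ^ 2 := by positivity
        have e2 : (0:ℝ) < γ ^ 2 := by positivity
        have e3 : (0:ℝ) < c ^ 2 := by positivity
        have p1 : (0:ℝ) ≤ 1 / β ^ 2 := by positivity
        have p2 : (0:ℝ) ≤ 4 / γ ^ 2 := by positivity
        have p3 : (0:ℝ) ≤ (1 + 4 / c ^ 2) / β ^ 2 := by positivity
        have expand : (1 / β ^ 2 + 4 / γ ^ 2 + (1 + 4 / c ^ 2) / β ^ 2) * (1 + s ^ 2)
            - (1 / β ^ 2 + 4 * s ^ 2 / γ ^ 2 + (1 + 4 / c ^ 2) / β ^ 2)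
            = 4 / γ ^ 2 + (1 / β ^ 2) * s ^ 2 + ((1 + 4 / c ^ 2) / β ^ 2) * s ^ 2 := by
          ring
        linarith [mul_nonneg p1 hs2, mul_nonneg p3 hs2, p2, expand]
      calc (1 + J ^ 2) * (1 / (a s) ^ 2 + Real.exp (-(c * J)) * (1 / β ^ 2))
          = (1 + J ^ 2) * (1 / (a s) ^ 2) +
            (1 + J ^ 2) * (Real.exp (-(c * J)) * (1 / β ^ 2)) := by ring
        _ ≤ 1 / β ^ 2 + 4 * s ^ 2 / γ ^ 2 + (1 + 4 / c ^ 2) / β ^ 2 := by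
            linarith [key1, key2]
        _ ≤ K * (1 + s ^ 2) := h12
    refine le_trans ?_ (le_of_eq (by ring :
      lam * (K * (1 + s ^ 2) / (1 + J ^ 2)) = lam * K * (1 + s ^ 2) / (1 + J ^ 2)))
    apply mul_le_mul_of_nonneg_left _ hlam.le
    rw [le_div_iff₀ hJ2]
    calc (1 / (a s) ^ 2 + Real.exp (-(c * J)) * (1 / β ^ 2)) * (1 + J ^ 2)
        = (1 + J ^ 2) * (1 / (a s) ^ 2 + Real.exp (-(c * J)) * (1 / β ^ 2)) := by ring
      _ ≤ K * (1 + s ^ 2) := hsum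
  -- measurability of the inner integral as a function of s
  have hinn_m : StronglyMeasurable
      (fun s : ℝ => ∫ t in Set.Ioi (0:ℝ), (t : ℂ) * φ t s) := by
    have : StronglyMeasurable (fun p : ℝ × ℝ => ((p.2 : ℂ)) * φ p.2 p.1) := by
      apply Measurable.stronglyMeasurable
      exact (Complex.measurable_ofReal.comp measurable_snd).mul
        (hφm.comp (measurable_snd.prodMk measurable_fst))
    exact this.integral_prod_right'
  have hFm : AEStronglyMeasurable
      (fun s : ℝ => h s * ∫ t in Set.Ioi (0:ℝ), (t : ℂ) * φ t s) volume :=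
    (hhm.aestronglyMeasurable.mul hinn_m.aestronglyMeasurable)
  -- a.e. bound for outer integrand
  have hbound_ae : ∀ᵐ s : ℝ, ‖h s * ∫ t in Set.Ioi (0:ℝ), (t : ℂ) * φ t s‖ ≤
      lam * K / (1 + J ^ 2) * (‖h s‖ * (1 + s ^ 2)) := by
    have h0 : ∀ s : ℝ, s ≠ 0 → ‖h s * ∫ t in Set.Ioi (0:ℝ), (t : ℂ) * φ t s‖ ≤
        lam * K / (1 + J ^ 2) * (‖h s‖ * (1 + s ^ 2)) := by
      intro s hs
      rw [norm_mul]
      calc ‖h s‖ * ‖∫ t in Set.Ioi (0:ℝ), (t : ℂ) * φ t s‖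
          ≤ ‖h s‖ * (lam * K * (1 + s ^ 2) / (1 + J ^ 2)) :=
            mul_le_mul_of_nonneg_left (hinner s hs) (norm_nonneg _)
        _ = lam * K / (1 + J ^ 2) * (‖h s‖ * (1 + s ^ 2)) := by ring
    have hz : ∀ᵐ s : ℝ, s ≠ 0 := by
      have hset : {s : ℝ | ¬ s ≠ 0} = {(0:ℝ)} := by ext s; simp
      rw [ae_iff, hset]
      exact measure_singleton 0
    filter_upwards [hz] with s hs using h0 s hs
  have hFi : Integrable (fun s : ℝ => h s * ∫ t in Set.Ioi (0:ℝ), (t : ℂ) * φ t s) := by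
    refine Integrable.mono' (hhi.const_mul (lam * K / (1 + J ^ 2))) hFm hbound_ae
  refine ⟨hFi, ?_⟩
  have hfin : ‖∫ s : ℝ, h s * ∫ t in Set.Ioi (0:ℝ), (t : ℂ) * φ t s‖ ≤
      ∫ s : ℝ, lam * K / (1 + J ^ 2) * (‖h s‖ * (1 + s ^ 2)) := by
    apply norm_integral_le_of_norm_le (hhi.const_mul _) hbound_ae
  rw [integral_const_mul] at hfin
  refine hfin.trans (le_of_eq ?_)
  ring
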